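/- Let p, q be points in the open unit ball of R^d. Define for a point x the power distance to the ball with center c_i = p_i / (2·sqrt(1-‖p_i‖²)) and squared radius r_i² = ‖p_i‖²/(4(1-‖p_i‖²)) - 1/sqrt(1-‖p_i‖²) (where p_1 = p, p_2 = q). Then the radical hyperplane {x : ‖x-c_1‖² - r_1² = ‖x-c_2‖² - r_2²} coincides with the Klein bisector hyperplane {x : ⟨x, sqrt(1-‖p‖²)·q - sqrt(1-‖q‖²)·p⟩ + sqrt(1-‖q‖²) - sqrt(1-‖p‖²) = 0}, up to a nonzero scalar multiple of the defining linear equation. -/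

import Mathlib

open scoped RealInnerProductSpace

theorem klein_bisector_eq_radical_hyperplane {d : ℕ} (p q : EuclideanSpace ℝ (Fin d))
    (hp : ‖p‖ < 1) (hq : ‖q‖ < 1) :
    ∃ lam : ℝ, lam ≠ 0 ∧ ∀ x : EuclideanSpace ℝ (Fin d),
      (‖x - (2 * Real.sqrt (1 - ‖p‖ ^ 2))⁻¹ • p‖ ^ 2 -
          (‖p‖ ^ 2 / (4 * (1 - ‖p‖ ^ 2)) - 1 / Real.sqrt (1 - ‖p‖ ^ 2))) -
      (‖x - (2 * Real.sqrt (1 - ‖q‖ ^ 2))⁻¹ • q‖ ^ 2 -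
          (‖q‖ ^ 2 / (4 * (1 - ‖q‖ ^ 2)) - 1 / Real.sqrt (1 - ‖q‖ ^ 2))) =
      lam * (⟪x, Real.sqrt (1 - ‖p‖ ^ 2) • q - Real.sqrt (1 - ‖q‖ ^ 2) • p⟫ +
        Real.sqrt (1 - ‖q‖ ^ 2) - Real.sqrt (1 - ‖p‖ ^ 2)) := by
  have h0p : (0:ℝ) ≤ ‖p‖ := norm_nonneg _
  have h0q : (0:ℝ) ≤ ‖q‖ := norm_nonneg _
  have hpp : (0:ℝ) < 1 - ‖p‖ ^ 2 := by nlinarith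
  have hqq : (0:ℝ) < 1 - ‖q‖ ^ 2 := by nlinarith
  have hsp : (0:ℝ) < Real.sqrt (1 - ‖p‖ ^ 2) := Real.sqrt_pos.mpr hpp
  have hsq : (0:ℝ) < Real.sqrt (1 - ‖q‖ ^ 2) := Real.sqrt_pos.mpr hqq
  have hsp2 : Real.sqrt (1 - ‖p‖ ^ 2) ^ 2 = 1 - ‖p‖ ^ 2 := Real.sq_sqrt hpp.le
  have hsq2 : Real.sqrt (1 - ‖q‖ ^ 2) ^ 2 = 1 - ‖q‖ ^ 2 := Real.sq_sqrt hqq.le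
  refine ⟨(Real.sqrt (1 - ‖p‖ ^ 2) * Real.sqrt (1 - ‖q‖ ^ 2))⁻¹, by positivity, fun x => ?_⟩
  have expand : ∀ (y : EuclideanSpace ℝ (Fin d)) (t : ℝ),
      ‖x - t • y‖ ^ 2 = ‖x‖ ^ 2 - 2 * t * ⟪x, y⟫ + t ^ 2 * ‖y‖ ^ 2 := by
    intro y t
    rw [norm_sub_sq_real, norm_smul, real_inner_smul_right]
    simp [mul_pow]
    ring
  rw [expand, expand, inner_sub_right, real_inner_smul_right, real_inner_smul_right]
  have hp2 : ((2 * Real.sqrt (1 - ‖p‖ ^ 2))⁻¹) ^ 2 = (4 * (1 - ‖p‖ ^ 2))⁻¹ := by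
    rw [← hsp2]; field_simp; rw [Real.sqrt_sq hsp.le]; ring
  have hq2 : ((2 * Real.sqrt (1 - ‖q‖ ^ 2))⁻¹) ^ 2 = (4 * (1 - ‖q‖ ^ 2))⁻¹ := by
    rw [← hsq2]; field_simp; rw [Real.sqrt_sq hsq.le]; ring
  rw [hp2, hq2]
  field_simp
  ring
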